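/- arXiv:1609.05471 — 6 statements merged into one kernel-verified Lean document; each statement's English description precedes it below -/
import Mathlib

section
/- For any maximum independent set M of G_P, the partial order F_M is a P-forest. -/
attribute [local instance] Classical.propDecidable

noncomputable section

open Finset

variable {n : ℕ}

/-- The comparability graph of the poset structure `P` on `Fin n`; for an order
ideal of `P`, connectivity of its induced subgraph in this graph agrees with
connectivity of the Hasse diagram. -/
def compGraph (P : PartialOrder (Fin n)) : SimpleGraph (Fin n) where
  Adj i j := i ≠ j ∧ (P.le i j ∨ P.le j i)
  symm := by
    constructor
    intro i j h
    exact ⟨h.1.symm, h.2.symm⟩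
  loopless := by
    constructor
    intro i h
    exact h.1 rfl

/-- `J` is an order ideal of the poset `P`. -/
def IsIdeal (P : PartialOrder (Fin n)) (J : Finset (Fin n)) : Prop :=
  ∀ i ∈ J, ∀ j : Fin n, P.le j i → j ∈ J

/-- The Hasse diagram of `J` as a subposet of `P` is a connected graph. -/
def JConn (P : PartialOrder (Fin n)) (J : Finset (Fin n)) : Prop :=
  ((compGraph P).induce (↑J : Set (Fin n))).Connected

/-- `J` is a connected order ideal of `P`. -/
def IsConnIdeal (P : PartialOrder (Fin n)) (J : Finset (Fin n)) : Prop :=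
  IsIdeal P J ∧ JConn P J

/-- The type of connected order ideals of `P` (the vertices of `G_P`). -/
abbrev ConnIdeal (P : PartialOrder (Fin n)) : Type :=
  {J : Finset (Fin n) // IsConnIdeal P J}

instance (P : PartialOrder (Fin n)) : Fintype (ConnIdeal P) := Fintype.ofFinite _

/-- `A` and `B` intersect nontrivially. -/
def Nontriv (A B : Finset (Fin n)) : Prop :=
  (A ∩ B).Nonempty ∧ ¬ A ⊆ B ∧ ¬ B ⊆ A

/-- The graph `G_P` on the connected order ideals of `P`, with two ideals
adjacent iff they intersect nontrivially. -/
def GP (P : PartialOrder (Fin n)) : SimpleGraph (ConnIdeal P) where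
  Adj A B := Nontriv A.1 B.1
  symm := by
    constructor
    intro A B h
    exact ⟨by rw [Finset.inter_comm]; exact h.1, h.2.2, h.2.1⟩
  loopless := by
    constructor
    intro A h
    exact h.2.1 (Finset.Subset.refl _)

instance (P : PartialOrder (Fin n)) : Fintype ((GP P).ConnectedComponent) :=
  Fintype.ofFinite _

instance (P : PartialOrder (Fin n)) : Fintype ((GP P).edgeSet) :=
  Fintype.ofFinite _

/-- `s` is an independent set of the graph `G`. -/
def IsIndep {V : Type*} (G : SimpleGraph V) (s : Finset V) : Prop :=
  ∀ a ∈ s, ∀ b ∈ s, ¬ G.Adj a b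

/-- `s` is a maximum independent set of the graph `G`. -/
def IsMaxIndep {V : Type*} (G : SimpleGraph V) (s : Finset V) : Prop :=
  IsIndep G s ∧ ∀ t : Finset V, IsIndep G t → t.card ≤ s.card

/-- `s` is a maximum independent set of the subgraph of `G` induced on the
vertex set `S` (e.g. on a connected component of `G`). -/
def IsMaxIndepOn {V : Type*} (G : SimpleGraph V) (S : Set V) (s : Finset V) : Prop :=
  ↑s ⊆ S ∧ IsIndep G s ∧ ∀ t : Finset V, ↑t ⊆ S → IsIndep G t → t.card ≤ s.card

/-- `μ(M, J) = ⋃_{J' ∈ M, J' ⊊ J} J'`. -/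
def mu (P : PartialOrder (Fin n)) (M : Finset (ConnIdeal P)) (J : Finset (Fin n)) :
    Finset (Fin n) :=
  (M.filter (fun J' => J'.1 ⊂ J)).biUnion (fun J' => J'.1)

/-- The strict order relation of the poset `F_M` associated with a maximum
independent set `M` of `G_P`: `i <_{F_M} j` iff `J_a ⊊ J_b` where `J_a, J_b ∈ M`
satisfy `J_a \ μ(M,J_a) = {i}` and `J_b \ μ(M,J_b) = {j}`. -/
def FMlt (P : PartialOrder (Fin n)) (M : Finset (ConnIdeal P)) (i j : Fin n) : Prop :=
  ∃ Ja ∈ M, ∃ Jb ∈ M,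
    Ja.1 \ mu P M Ja.1 = {i} ∧ Jb.1 \ mu P M Jb.1 = {j} ∧ Ja.1 ⊂ Jb.1

/-- The order relation of the poset `F_M`. -/
def FMle (P : PartialOrder (Fin n)) (M : Finset (ConnIdeal P)) (i j : Fin n) : Prop :=
  i = j ∨ FMlt P M i j

/-- Strict relation associated with the relation `le`. -/
def ltRel (le : Fin n → Fin n → Prop) (i j : Fin n) : Prop := le i j ∧ i ≠ j

/-- `j` covers `i` in the order given by the relation `le`. -/
def CovRel (le : Fin n → Fin n → Prop) (i j : Fin n) : Prop :=
  ltRel le i j ∧ ∀ k : Fin n, ltRel le i k → ¬ ltRel le k j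

/-- The principal order ideal `Λ_i = {j : j ≤ i}` of the order given by `le`. -/
def LamRel (le : Fin n → Fin n → Prop) (i : Fin n) : Finset (Fin n) :=
  Finset.univ.filter (fun j => le j i)

/-- The descent set of a forest order given by the relation `le`:
elements `i` whose parent (the element covering `i`) is smaller than `i`. -/
def DesRel (le : Fin n → Fin n → Prop) : Finset (Fin n) :=
  Finset.univ.filter (fun i => ∃ j : Fin n, CovRel le i j ∧ j < i)

/-- `Des(M) = Des(F_M)`. -/
def DesM (P : PartialOrder (Fin n)) (M : Finset (ConnIdeal P)) : Finset (Fin n) :=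
  DesRel (FMle P M)

/-- `Des(M_r, M)`. -/
def DesMr (P : PartialOrder (Fin n)) (Mr M : Finset (ConnIdeal P)) : Finset (Fin n) :=
  (DesM P M).filter (fun i => ∃ J ∈ Mr, J.1 \ mu P M J.1 = {i})

/-- `Des̄(M_r, M)`. -/
def DesBarMr (P : PartialOrder (Fin n)) (Mr M : Finset (ConnIdeal P)) :
    Finset (ConnIdeal P) :=
  Mr.filter (fun J => ∃ i ∈ DesMr P Mr M, J.1 \ mu P M J.1 = {i})

/-- The relation `le` is (the order relation of) a `P`-forest: a partial order
whose Hasse diagram is a forest, all of whose principal order ideals are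
connected order ideals of `P`, and such that for incomparable `i, j` the union
`Λ_i ∪ Λ_j` is a disconnected order ideal of `P`. -/
structure IsPForestRel (P : PartialOrder (Fin n)) (le : Fin n → Fin n → Prop) : Prop where
  refl : ∀ i, le i i
  trans : ∀ i j k, le i j → le j k → le i k
  antisymm : ∀ i j, le i j → le j i → i = j
  forest : ∀ i j k, CovRel le i j → CovRel le i k → j = k
  connIdeal : ∀ i, IsConnIdeal P (LamRel le i)
  disc : ∀ i j : Fin n, ¬ le i j → ¬ le j i →
    IsIdeal P (LamRel le i ∪ LamRel le j) ∧ ¬ JConn P (LamRel le i ∪ LamRel le j)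

/-- The principal order ideal `Λ_i^P` of `P`. -/
def PIdeal (P : PartialOrder (Fin n)) (i : Fin n) : Finset (Fin n) :=
  Finset.univ.filter (fun k => P.le k i)

/-- The generating set `gs(J)`: the maximal elements of `J` with respect to `P`. -/
def gsJ (P : PartialOrder (Fin n)) (J : Finset (Fin n)) : Finset (Fin n) :=
  J.filter (fun i => ∀ j ∈ J, ¬ P.lt i j)

/-- `P` is naturally labeled. -/
def NatLabeled (P : PartialOrder (Fin n)) : Prop :=
  ∀ i j : Fin n, P.lt i j → i < j

/-- `U_max(M, J)`: the maximal members of `U(M,J) = {J' ∈ M : J' ⊊ J}`. -/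
def Umax (P : PartialOrder (Fin n)) (M : Finset (ConnIdeal P)) (J : Finset (Fin n)) :
    Finset (ConnIdeal P) :=
  (M.filter (fun Ja => Ja.1 ⊂ J)).filter
    (fun Ja => ∀ Jb ∈ M, Jb.1 ⊂ J → Jb ≠ Ja → ¬ Ja.1 ⊂ Jb.1)

/-- The set of vertices of `G_P` which are principal order ideals of `P`. -/
def PIdealSet (P : PartialOrder (Fin n)) : Set (ConnIdeal P) :=
  {A : ConnIdeal P | ∃ i : Fin n, A.1 = PIdeal P i}

/-- The graph `H_P`: the subgraph of `G_P` induced by the principal order ideals. -/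
def HP (P : PartialOrder (Fin n)) : SimpleGraph (PIdealSet P) :=
  (GP P).induce (PIdealSet P)

/-- `f` is a `P`-partition. -/
def IsPPartition (P : PartialOrder (Fin n)) (f : Fin n → ℕ) : Prop :=
  (∀ i j : Fin n, P.lt i j → f j ≤ f i) ∧
  (∀ i j : Fin n, P.lt i j → j < i → f j < f i)

/-- The monomial `∏_{k ∈ J} x_k`. -/
def xJ (J : Finset (Fin n)) : MvPowerSeries (Fin n) ℚ :=
  ∏ k ∈ J, MvPowerSeries.X k

/-- The set of linear extensions of `P`, viewed as permutations `w` of `Fin n`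
(in positions `0, …, n-1`) such that `i < j` whenever `w i <_P w j`. -/
def LinExts (P : PartialOrder (Fin n)) : Finset (Equiv.Perm (Fin n)) :=
  Finset.univ.filter (fun w => ∀ i j : Fin n, P.lt (w i) (w j) → i < j)

/-- The major index of a permutation (with 1-indexed positions). -/
def maj (w : Equiv.Perm (Fin n)) : ℕ :=
  ∑ i ∈ Finset.univ.filter
      (fun i : Fin n => ∃ h : (i : ℕ) + 1 < n, w ⟨(i : ℕ) + 1, h⟩ < w i),
    ((i : ℕ) + 1)

/-- The finset of maximum independent sets of the connected component `c` of `G_P`. -/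
def MaxIndepsOn (P : PartialOrder (Fin n)) (c : (GP P).ConnectedComponent) :
    Finset (Finset (ConnIdeal P)) :=
  Finset.univ.filter (fun Mr : Finset (ConnIdeal P) => IsMaxIndepOn (GP P) c.supp Mr)


section Aux

variable {P : PartialOrder (Fin n)}

/-- Reachability within a finset `J` in the comparability graph. -/
def Rch (P : PartialOrder (Fin n)) (J : Finset (Fin n)) : Fin n → Fin n → Prop :=
  Relation.ReflTransGen (fun a b => a ∈ J ∧ b ∈ J ∧ (compGraph P).Adj a b)

lemma Rch.symm {J : Finset (Fin n)} {x y : Fin n} (h : Rch P J x y) : Rch P J y x :=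
  (@Relation.ReflTransGen.symmetric _ _ ⟨fun _ _ hab => ⟨hab.2.1, hab.1, hab.2.2.symm⟩⟩).symm _ _ h

lemma Rch.mono {J K : Finset (Fin n)} (hJK : J ⊆ K) {x y : Fin n} (h : Rch P J x y) :
    Rch P K x y :=
  Relation.ReflTransGen.mono (fun _ _ hab => ⟨hJK hab.1, hJK hab.2.1, hab.2.2⟩) _ _ h

lemma walk_to_rch {J : Finset (Fin n)} {a b : (↑J : Set (Fin n))}
    (w : ((compGraph P).induce (↑J : Set (Fin n))).Walk a b) : Rch P J a.1 b.1 := by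
  induction w with
  | nil => exact Relation.ReflTransGen.refl
  | @cons u v _ h p ih =>
      exact Relation.ReflTransGen.head ⟨Finset.mem_coe.mp u.2, Finset.mem_coe.mp v.2, h⟩ ih

lemma rch_to_reachable {J : Finset (Fin n)} {x y : Fin n} (hx : x ∈ J) (h : Rch P J x y) :
    ∀ hy : y ∈ J, ((compGraph P).induce (↑J : Set (Fin n))).Reachable ⟨x, hx⟩ ⟨y, hy⟩ := by
  induction h with
  | refl => exact fun hy => SimpleGraph.Reachable.refl _
  | @tail b c _ step ih =>
      intro hy
      exact (ih step.1).trans (SimpleGraph.Adj.reachable (by exact step.2.2 :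
        ((compGraph P).induce (↑J : Set (Fin n))).Adj ⟨b, step.1⟩ ⟨c, hy⟩))

lemma jconn_iff {J : Finset (Fin n)} :
    JConn P J ↔ J.Nonempty ∧ ∀ x ∈ J, ∀ y ∈ J, Rch P J x y := by
  constructor
  · intro h
    obtain ⟨v⟩ := h.nonempty
    refine ⟨⟨v.1, Finset.mem_coe.mp v.2⟩, ?_⟩
    intro x hx y hy
    obtain ⟨w⟩ := h.preconnected ⟨x, hx⟩ ⟨y, hy⟩
    exact walk_to_rch w
  · rintro ⟨⟨x0, hx0⟩, h⟩
    rw [JConn, SimpleGraph.connected_iff]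
    refine ⟨fun a b => ?_, ⟨⟨x0, hx0⟩⟩⟩
    obtain ⟨a, ha⟩ := a
    obtain ⟨b, hb⟩ := b
    exact rch_to_reachable (Finset.mem_coe.mp ha) (h a ha b hb) (Finset.mem_coe.mp hb)


variable {M : Finset (ConnIdeal P)}

lemma mem_mu {J : Finset (Fin n)} {i : Fin n} :
    i ∈ mu P M J ↔ ∃ A ∈ M, A.1 ⊂ J ∧ i ∈ A.1 := by
  simp only [mu, Finset.mem_biUnion, Finset.mem_filter]
  constructor
  · rintro ⟨A, ⟨hA, hsub⟩, hi⟩; exact ⟨A, hA, hsub, hi⟩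
  · rintro ⟨A, hA, hsub, hi⟩; exact ⟨A, ⟨hA, hsub⟩, hi⟩

lemma laminar (hM : IsIndep (GP P) M) {A B : ConnIdeal P} (hA : A ∈ M) (hB : B ∈ M)
    {x : Fin n} (hxA : x ∈ A.1) (hxB : x ∈ B.1) : A.1 ⊆ B.1 ∨ B.1 ⊆ A.1 := by
  by_contra hcon
  push_neg at hcon
  exact hM A hA B hB ⟨⟨x, Finset.mem_inter.2 ⟨hxA, hxB⟩⟩, hcon.1, hcon.2⟩

/-- The set `J \ μ(M,J)`. -/
def Dset (P : PartialOrder (Fin n)) (M : Finset (ConnIdeal P)) (A : ConnIdeal P) :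
    Finset (Fin n) := A.1 \ mu P M A.1

lemma D_unique (hM : IsIndep (GP P) M) {A B : ConnIdeal P} (hA : A ∈ M) (hB : B ∈ M)
    {i : Fin n} (hiA : Dset P M A = {i}) (hiB : Dset P M B = {i}) : A = B := by
  have hiA' : i ∈ Dset P M A := hiA ▸ Finset.mem_singleton_self i
  have hiB' : i ∈ Dset P M B := hiB ▸ Finset.mem_singleton_self i
  have hiA1 : i ∈ A.1 := (Finset.mem_sdiff.1 hiA').1
  have hiB1 : i ∈ B.1 := (Finset.mem_sdiff.1 hiB').1
  rcases laminar hM hA hB hiA1 hiB1 with hsub | hsub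
  · rcases eq_or_lt_of_le (Finset.le_iff_subset.2 hsub) with heq | hlt
    · exact Subtype.ext heq
    · exact absurd (mem_mu.2 ⟨A, hA, hlt, hiA1⟩) (Finset.mem_sdiff.1 hiB').2
  · rcases eq_or_lt_of_le (Finset.le_iff_subset.2 hsub) with heq | hlt
    · exact Subtype.ext heq.symm
    · exact absurd (mem_mu.2 ⟨B, hB, hlt, hiB1⟩) (Finset.mem_sdiff.1 hiA').2

lemma D_disjoint (hM : IsIndep (GP P) M) {A B : ConnIdeal P} (hA : A ∈ M) (hB : B ∈ M)
    (hne : A ≠ B) : Disjoint (Dset P M A) (Dset P M B) := by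
  rw [Finset.disjoint_left]
  intro i hiA hiB
  have hiA1 : i ∈ A.1 := (Finset.mem_sdiff.1 hiA).1
  have hiB1 : i ∈ B.1 := (Finset.mem_sdiff.1 hiB).1
  rcases laminar hM hA hB hiA1 hiB1 with hsub | hsub
  · rcases eq_or_lt_of_le (Finset.le_iff_subset.2 hsub) with heq | hlt
    · exact hne (Subtype.ext heq)
    · exact (Finset.mem_sdiff.1 hiB).2 (mem_mu.2 ⟨A, hA, hlt, hiA1⟩)
  · rcases eq_or_lt_of_le (Finset.le_iff_subset.2 hsub) with heq | hlt
    · exact hne (Subtype.ext heq.symm)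
    · exact (Finset.mem_sdiff.1 hiA).2 (mem_mu.2 ⟨B, hB, hlt, hiB1⟩)


lemma D_nonempty (hM : IsIndep (GP P) M) {A : ConnIdeal P} (hA : A ∈ M) :
    (Dset P M A).Nonempty := by
  by_contra hemp
  rw [Finset.not_nonempty_iff_eq_empty, Dset, Finset.sdiff_eq_empty_iff_subset] at hemp
  -- every element of A.1 lies in a member of M properly contained in A.1
  obtain ⟨⟨y0, hy0⟩, hrch⟩ := jconn_iff.1 A.2.2
  -- the set of members of M properly contained in A containing y0
  set C : Finset (ConnIdeal P) := M.filter (fun B => B.1 ⊂ A.1 ∧ y0 ∈ B.1) with hC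
  have hCne : C.Nonempty := by
    obtain ⟨B, hB, hBsub, hyB⟩ := mem_mu.1 (hemp hy0)
    exact ⟨B, Finset.mem_filter.2 ⟨hB, hBsub, hyB⟩⟩
  obtain ⟨Jst, hJstC, hJstmax⟩ := Finset.exists_max_image C (fun B => B.1.card) hCne
  obtain ⟨hJstM, hJstsub, hy0Jst⟩ := Finset.mem_filter.1 hJstC
  -- claim : A.1 ⊆ Jst.1
  have hclaim : ∀ y ∈ A.1, y ∈ Jst.1 := by
    intro y hy
    have h0 : Rch P A.1 y0 y := hrch y0 hy0 y hy
    clear hy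
    induction h0 with
    | refl => exact hy0Jst
    | @tail b c _ step ih =>
        have hb : b ∈ Jst.1 := ih
        rcases step.2.2.2 with hle | hle
        · -- b ≤_P c : c is in some member J_c ⊊ A
          obtain ⟨Jc, hJcM, hJcsub, hcJc⟩ := mem_mu.1 (hemp step.2.1)
          have hbJc : b ∈ Jc.1 := Jc.2.1 c hcJc b hle
          rcases laminar hM hJstM hJcM hb hbJc with hsub | hsub
          · -- Jst ⊆ Jc ; by maximality they are equal
            have hJcC : Jc ∈ C := Finset.mem_filter.2 ⟨hJcM, hJcsub, hsub hy0Jst⟩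
            have : Jst.1 = Jc.1 :=
              Finset.eq_of_subset_of_card_le hsub (hJstmax Jc hJcC)
            exact this.symm ▸ hcJc
          · exact hsub hcJc
        · -- c ≤_P b : use that Jst is an ideal
          exact Jst.2.1 b hb c hle
  exact (Finset.ssubset_iff_subset_ne.1 hJstsub).2
    (Finset.Subset.antisymm hJstsub.1 hclaim)

lemma exists_indep_card_n (P : PartialOrder (Fin n)) :
    ∃ T : Finset (ConnIdeal P), IsIndep (GP P) T ∧ T.card = n := by
  have hpo : IsPartialOrder (Fin n) P.le :=
    { refl := P.le_refl, trans := P.le_trans, antisymm := P.le_antisymm }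
  obtain ⟨s, hlin, hext⟩ := @extend_partialOrder (Fin n) P.le hpo
  have hsrefl : ∀ a, s a a := fun a => hlin.1.1.1.refl a
  have hstrans : ∀ {a b c}, s a b → s b c → s a c := fun h1 h2 => hlin.1.1.2.trans _ _ _ h1 h2
  have hsanti : ∀ {a b}, s a b → s b a → a = b := fun h1 h2 => hlin.1.2.antisymm _ _ h1 h2
  have hstot : ∀ a b, s a b ∨ s b a := fun a b => hlin.2.total a b
  set I : Fin n → Finset (Fin n) := fun i => Finset.univ.filter (fun j => s j i) with hI
  set Jf : Fin n → Finset (Fin n) := fun i => (I i).filter (fun x => Rch P (I i) x i) with hJf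
  have hmemI : ∀ {i j}, j ∈ I i ↔ s j i := by
    intro i j; simp [hI]
  have hIideal : ∀ i, IsIdeal P (I i) := by
    intro i x hx y hy
    exact hmemI.2 (hstrans (hext _ _ hy) (hmemI.1 hx))
  have hiJf : ∀ i, i ∈ Jf i := fun i =>
    Finset.mem_filter.2 ⟨hmemI.2 (hsrefl i), Relation.ReflTransGen.refl⟩
  have hJfI : ∀ i, Jf i ⊆ I i := fun i => Finset.filter_subset _ _
  have hJideal : ∀ i, IsIdeal P (Jf i) := by
    intro i x hx y hy
    obtain ⟨hxI, hxR⟩ := Finset.mem_filter.1 hx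
    have hyI : y ∈ I i := hIideal i x hxI y hy
    by_cases hxy : y = x
    · exact hxy ▸ hx
    · exact Finset.mem_filter.2 ⟨hyI,
        Relation.ReflTransGen.head ⟨hyI, hxI, hxy, Or.inl hy⟩ hxR⟩
  have hkey : ∀ i x, Rch P (I i) x i → Rch P (Jf i) x i := by
    intro i x hx
    induction hx using Relation.ReflTransGen.head_induction_on with
    | refl => exact Relation.ReflTransGen.refl
    | head step rest ih =>
        exact Relation.ReflTransGen.head
          ⟨Finset.mem_filter.2 ⟨step.1, Relation.ReflTransGen.head step rest⟩,
           Finset.mem_filter.2 ⟨step.2.1, rest⟩, step.2.2⟩ ih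
  have hJconn : ∀ i, JConn P (Jf i) := by
    intro i
    refine jconn_iff.2 ⟨⟨i, hiJf i⟩, ?_⟩
    intro x hx y hy
    exact (hkey i x (Finset.mem_filter.1 hx).2).trans
      (hkey i y (Finset.mem_filter.1 hy).2).symm
  -- one-sided laminarity
  have hlamside : ∀ i j, s i j → (Jf i ∩ Jf j).Nonempty → Jf i ⊆ Jf j := by
    intro i j hsij ⟨x, hx⟩
    obtain ⟨hxi, hxj⟩ := Finset.mem_inter.1 hx
    have hIij : I i ⊆ I j := fun k hk => hmemI.2 (hstrans (hmemI.1 hk) hsij)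
    intro y hy
    have h1 : Rch P (I i) y x :=
      ((Finset.mem_filter.1 hy).2).trans ((Finset.mem_filter.1 hxi).2).symm
    have h2 : Rch P (I j) y j := (h1.mono hIij).trans (Finset.mem_filter.1 hxj).2
    exact Finset.mem_filter.2 ⟨hIij (hJfI i hy), h2⟩
  have hlam : ∀ i j, (Jf i ∩ Jf j).Nonempty → Jf i ⊆ Jf j ∨ Jf j ⊆ Jf i := by
    intro i j hne
    rcases hstot i j with h | h
    · exact Or.inl (hlamside i j h hne)
    · exact Or.inr (hlamside j i h (by rwa [Finset.inter_comm] at hne))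
  set F : Fin n → ConnIdeal P := fun i => ⟨Jf i, hJideal i, hJconn i⟩ with hF
  have hFinj : Function.Injective F := by
    intro i j hij
    have h1 : Jf i = Jf j := congrArg Subtype.val hij
    by_contra hne
    rcases hstot i j with h | h
    · have : j ∈ I i := hJfI i (h1 ▸ hiJf j)
      exact hne (hsanti h (hmemI.1 this))
    · have : i ∈ I j := hJfI j (h1.symm ▸ hiJf i)
      exact hne (hsanti (hmemI.1 this) h)
  refine ⟨Finset.univ.image F, ?_, ?_⟩
  · intro a ha b hb hadj
    obtain ⟨i, _, rfl⟩ := Finset.mem_image.1 ha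
    obtain ⟨j, _, rfl⟩ := Finset.mem_image.1 hb
    obtain ⟨⟨x, hx⟩, hns1, hns2⟩ := hadj
    rcases hlam i j ⟨x, hx⟩ with h | h
    · exact hns1 h
    · exact hns2 h
  · rw [Finset.card_image_of_injective _ hFinj, Finset.card_univ, Fintype.card_fin]

lemma D_exists (hM : IsMaxIndep (GP P) M) : ∀ i : Fin n, ∃ A ∈ M, Dset P M A = {i} := by
  have hind := hM.1
  -- |M| ≥ n
  obtain ⟨T, hTind, hTcard⟩ := exists_indep_card_n P
  have hnM : n ≤ M.card := le_of_eq_of_le hTcard.symm (hM.2 T hTind)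
  -- sum of |Dset| = |biUnion| ≤ n
  have hdisj : ∀ A ∈ M, ∀ B ∈ M, A ≠ B → Disjoint (Dset P M A) (Dset P M B) :=
    fun A hA B hB hne => D_disjoint hind hA hB hne
  have hsum : ∑ A ∈ M, (Dset P M A).card = (M.biUnion (Dset P M)).card :=
    (Finset.card_biUnion hdisj).symm
  have hsumle : ∑ A ∈ M, (Dset P M A).card ≤ n := by
    rw [hsum]
    calc (M.biUnion (Dset P M)).card ≤ (Finset.univ : Finset (Fin n)).card :=
          Finset.card_le_card (Finset.subset_univ _)
      _ = n := by rw [Finset.card_univ, Fintype.card_fin]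
  have hone : ∀ A ∈ M, 1 ≤ (Dset P M A).card :=
    fun A hA => Finset.card_pos.2 (D_nonempty hind hA)
  have hMlesum : M.card ≤ ∑ A ∈ M, (Dset P M A).card := by
    calc M.card = ∑ _A ∈ M, 1 := by rw [Finset.sum_const, smul_eq_mul, mul_one]
      _ ≤ _ := Finset.sum_le_sum hone
  have hsumeq : ∑ A ∈ M, (Dset P M A).card = n :=
    le_antisymm hsumle (le_trans hnM hMlesum)
  have hMcard : M.card = n := le_antisymm (le_trans hMlesum hsumle) hnM
  -- each Dset has card 1
  have hcard1 : ∀ A ∈ M, (Dset P M A).card = 1 := by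
    by_contra hcon
    push_neg at hcon
    obtain ⟨A0, hA0, hA0ne⟩ := hcon
    have hlt : ∑ _A ∈ M, 1 < ∑ A ∈ M, (Dset P M A).card :=
      Finset.sum_lt_sum hone ⟨A0, hA0, lt_of_le_of_ne (hone A0 hA0) (Ne.symm hA0ne)⟩
    rw [Finset.sum_const, smul_eq_mul, mul_one, hMcard, hsumeq] at hlt
    exact lt_irrefl n hlt
  -- biUnion = univ
  have huniv : M.biUnion (Dset P M) = Finset.univ := by
    apply Finset.eq_univ_of_card
    rw [← hsum, hsumeq, Fintype.card_fin]
  intro i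
  have : i ∈ M.biUnion (Dset P M) := huniv ▸ Finset.mem_univ i
  obtain ⟨A, hA, hiA⟩ := Finset.mem_biUnion.1 this
  obtain ⟨j, hj⟩ := Finset.card_eq_one.1 (hcard1 A hA)
  refine ⟨A, hA, ?_⟩
  rw [hj] at hiA ⊢
  rw [Finset.mem_singleton.1 hiA]

lemma mem_of_Dset {A : ConnIdeal P} {i : Fin n} (hDA : Dset P M A = {i}) : i ∈ A.1 :=
  (Finset.mem_sdiff.1 (hDA ▸ Finset.mem_singleton_self i)).1

lemma not_mu_of_Dset {A : ConnIdeal P} {i : Fin n} (hDA : Dset P M A = {i}) :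
    i ∉ mu P M A.1 :=
  (Finset.mem_sdiff.1 (hDA ▸ Finset.mem_singleton_self i)).2

lemma lamRel_eq (hM : IsMaxIndep (GP P) M) {A : ConnIdeal P} (hA : A ∈ M) {i : Fin n}
    (hDA : Dset P M A = {i}) : LamRel (FMle P M) i = A.1 := by
  ext j
  simp only [LamRel, Finset.mem_filter, Finset.mem_univ, true_and]
  constructor
  · rintro (rfl | ⟨Ja, hJa, Jb, hJb, hDJa, hDJb, hlt⟩)
    · exact mem_of_Dset hDA
    · have hBA : Jb = A := D_unique hM.1 hJb hA hDJb hDA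
      exact hBA ▸ hlt.1 (mem_of_Dset hDJa)
  · intro hj
    obtain ⟨B, hB, hDB⟩ := D_exists hM j
    have hjB : j ∈ B.1 := mem_of_Dset hDB
    rcases laminar hM.1 hA hB hj hjB with hsub | hsub
    · rcases eq_or_lt_of_le (Finset.le_iff_subset.2 hsub) with heq | hlt
      · left
        have : ({i} : Finset (Fin n)) = {j} := by
          rw [← hDA, ← hDB]; congr 1; exact Subtype.ext heq
        exact (Finset.singleton_injective this).symm
      · exact absurd (mem_mu.2 ⟨A, hA, hlt, hj⟩) (not_mu_of_Dset hDB)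
    · rcases eq_or_lt_of_le (Finset.le_iff_subset.2 hsub) with heq | hlt
      · left
        have : ({i} : Finset (Fin n)) = {j} := by
          rw [← hDA, ← hDB]; congr 1; exact Subtype.ext heq.symm
        exact (Finset.singleton_injective this).symm
      · exact Or.inr ⟨B, hB, A, hA, hDB, hDA, hlt⟩

lemma statement_8' (P : PartialOrder (Fin n))
    (M : Finset (ConnIdeal P)) (hM : IsMaxIndep (GP P) M) :
    IsPForestRel P (FMle P M) := by
  have hind := hM.1
  constructor
  · -- refl
    exact fun i => Or.inl rfl
  · -- trans
    rintro i j k (rfl | ⟨Ja, hJa, Jb, hJb, hDJa, hDJb, hab⟩) hjk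
    · exact hjk
    rcases hjk with rfl | ⟨Jb', hJb', Jc, hJc, hDJb', hDJc, hbc⟩
    · exact Or.inr ⟨Ja, hJa, Jb, hJb, hDJa, hDJb, hab⟩
    · have : Jb' = Jb := D_unique hind hJb' hJb hDJb' hDJb
      exact Or.inr ⟨Ja, hJa, Jc, hJc, hDJa, hDJc, hab.trans (this ▸ hbc)⟩
  · -- antisymm
    rintro i j (rfl | ⟨Ja, hJa, Jb, hJb, hDJa, hDJb, hab⟩) hji
    · rfl
    rcases hji with rfl | ⟨Jb', hJb', Ja', hJa', hDJb', hDJa', hba⟩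
    · rfl
    · have h1 : Jb' = Jb := D_unique hind hJb' hJb hDJb' hDJb
      have h2 : Ja' = Ja := D_unique hind hJa' hJa hDJa' hDJa
      exact absurd (hab.trans (h1 ▸ h2 ▸ hba)) (ssubset_irrefl _)
  · -- forest
    rintro i j k ⟨⟨hij, hijne⟩, hcovj⟩ ⟨⟨hik, hikne⟩, hcovk⟩
    rcases hij with rfl | ⟨Ja, hJa, Jb, hJb, hDJa, hDJb, hab⟩
    · exact absurd rfl hijne
    rcases hik with rfl | ⟨Ja', hJa', Jc, hJc, hDJa', hDJc, hac'⟩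
    · exact absurd rfl hikne
    have hAeq : Ja' = Ja := D_unique hind hJa' hJa hDJa' hDJa
    have hac : Ja.1 ⊂ Jc.1 := hAeq ▸ hac'
    have hiJa : i ∈ Ja.1 := mem_of_Dset hDJa
    rcases laminar hind hJb hJc (hab.1 hiJa) (hac.1 hiJa) with hsub | hsub
    · rcases eq_or_lt_of_le (Finset.le_iff_subset.2 hsub) with heq | hlt
      · have hbc : Jb = Jc := Subtype.ext heq
        have : ({j} : Finset (Fin n)) = {k} := by rw [← hDJb, ← hDJc, hbc]
        exact Finset.singleton_injective this
      · -- i < j < k contradicts k covering i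
        have hjkne : j ≠ k := by
          rintro rfl
          exact (lt_irrefl _) (D_unique hind hJb hJc hDJb hDJc ▸ hlt)
        exact absurd ⟨Or.inr ⟨Jb, hJb, Jc, hJc, hDJb, hDJc, hlt⟩, hjkne⟩
          (hcovk j ⟨Or.inr ⟨Ja, hJa, Jb, hJb, hDJa, hDJb, hab⟩, hijne⟩)
    · rcases eq_or_lt_of_le (Finset.le_iff_subset.2 hsub) with heq | hlt
      · have hbc : Jb = Jc := Subtype.ext heq.symm
        have : ({j} : Finset (Fin n)) = {k} := by rw [← hDJb, ← hDJc, hbc]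
        exact Finset.singleton_injective this
      · have hkjne : k ≠ j := by
          rintro rfl
          exact (lt_irrefl _) (D_unique hind hJc hJb hDJc hDJb ▸ hlt)
        exact absurd ⟨Or.inr ⟨Jc, hJc, Jb, hJb, hDJc, hDJb, hlt⟩, hkjne⟩
          (hcovj k ⟨Or.inr ⟨Ja, hJa, Jc, hJc, hDJa, hDJc, hac⟩, hikne⟩)
  · -- connIdeal
    intro i
    obtain ⟨A, hA, hDA⟩ := D_exists hM i
    rw [lamRel_eq hM hA hDA]
    exact A.2
  · -- disc
    intro i j hij hji
    have hijne : i ≠ j := fun h => hij (Or.inl h)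
    obtain ⟨A, hA, hDA⟩ := D_exists hM i
    obtain ⟨B, hB, hDB⟩ := D_exists hM j
    have hAB : A ≠ B := by
      rintro rfl
      exact hijne (Finset.singleton_injective (hDA.symm.trans hDB))
    have hdisj : A.1 ∩ B.1 = ∅ := by
      by_contra hcon
      obtain ⟨x, hx⟩ := Finset.nonempty_iff_ne_empty.2 hcon
      obtain ⟨hxA, hxB⟩ := Finset.mem_inter.1 hx
      rcases laminar hind hA hB hxA hxB with hsub | hsub
      · rcases eq_or_lt_of_le (Finset.le_iff_subset.2 hsub) with heq | hlt
        · exact hAB (Subtype.ext heq)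
        · exact hij (Or.inr ⟨A, hA, B, hB, hDA, hDB, hlt⟩)
      · rcases eq_or_lt_of_le (Finset.le_iff_subset.2 hsub) with heq | hlt
        · exact hAB (Subtype.ext heq.symm)
        · exact hji (Or.inr ⟨B, hB, A, hA, hDB, hDA, hlt⟩)
    rw [lamRel_eq hM hA hDA, lamRel_eq hM hB hDB]
    constructor
    · -- ideal
      intro x hx y hy
      rcases Finset.mem_union.1 hx with h | h
      · exact Finset.mem_union_left _ (A.2.1 x h y hy)
      · exact Finset.mem_union_right _ (B.2.1 x h y hy)
    · -- not connected
      intro hconn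
      obtain ⟨-, hrch⟩ := jconn_iff.1 hconn
      have hiU : i ∈ A.1 ∪ B.1 := Finset.mem_union_left _ (mem_of_Dset hDA)
      have hjU : j ∈ A.1 ∪ B.1 := Finset.mem_union_right _ (mem_of_Dset hDB)
      have hstay : ∀ y, Rch P (A.1 ∪ B.1) i y → y ∈ A.1 := by
        intro y hrchy
        induction hrchy with
        | refl => exact mem_of_Dset hDA
        | @tail b c _ step ih =>
            rcases step.2.2.2 with hle | hle
            · rcases Finset.mem_union.1 step.2.1 with h | h
              · exact h
              · have : b ∈ B.1 := B.2.1 c h b hle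
                exact absurd (Finset.mem_inter.2 ⟨ih, this⟩) (by rw [hdisj]; exact Finset.notMem_empty b)
            · exact A.2.1 b ih c hle
      have : j ∈ A.1 := hstay j (hrch i hiU j hjU)
      exact absurd (Finset.mem_inter.2 ⟨this, mem_of_Dset hDB⟩)
        (by rw [hdisj]; exact Finset.notMem_empty j)
end Aux


/-- Lemma 2.5: for any maximum independent set `M` of `G_P`,
the associated order `F_M` is a `P`-forest. -/
theorem statement_8 (n : ℕ) (P : PartialOrder (Fin n))
    (M : Finset (ConnIdeal P)) (hM : IsMaxIndep (GP P) M) :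
    IsPForestRel P (FMle P M) :=
  statement_8' P M hM
end
end

section
/- Let J be a connected order ideal of P and let C be a connected subgraph of G_P such that J is not adjacent in G_P to any vertex of C. If there exists a vertex J_a of C with J_a ⊊ J, then J_b ⊊ J for every vertex J_b of C. -/
attribute [local instance] Classical.propDecidable

noncomputable section

open Finset

variable {n : ℕ}

/-- Lemma 3.2: let `J` be a connected order ideal of `P` and
`C` a connected subgraph of `G_P` none of whose vertices is adjacent to `J`.
If some vertex `J_a` of `C` satisfies `J_a ⊊ J`, then every vertex `J_b` of `C`
satisfies `J_b ⊊ J`. -/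
theorem statement_10 (n : ℕ) (P : PartialOrder (Fin n))
    (Jv : ConnIdeal P) (C : (GP P).Subgraph) (hC : C.Connected)
    (hnadj : ∀ A ∈ C.verts, ¬ (GP P).Adj Jv A)
    (Ja : ConnIdeal P) (hJa : Ja ∈ C.verts) (hsub : Ja.1 ⊂ Jv.1) :
    ∀ Jb ∈ C.verts, Jb.1 ⊂ Jv.1 := by
  have step : ∀ A B : ConnIdeal P, A ∈ C.verts → B ∈ C.verts →
      (GP P).Adj A B → A.1 ⊂ Jv.1 → B.1 ⊂ Jv.1 := by
    intro A B hA hB hadj hAsub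
    obtain ⟨⟨x, hx⟩, hAB, hBA⟩ := hadj
    simp only [Finset.mem_inter] at hx
    have hxJv : x ∈ Jv.1 := hAsub.subset hx.1
    have hnadjB := hnadj B hB
    have : ¬ Nontriv Jv.1 B.1 := hnadjB
    unfold Nontriv at this
    push_neg at this
    have hnonemp : (Jv.1 ∩ B.1).Nonempty := ⟨x, Finset.mem_inter.2 ⟨hxJv, hx.2⟩⟩
    rcases not_or_of_imp (this hnonemp) with hJvB | hBJv
    · push_neg at hJvB
      exact absurd (hAsub.subset.trans hJvB) hAB
    · refine ⟨hBJv, fun hle => ?_⟩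
      have hBeq : B = Jv := Subtype.ext (Finset.Subset.antisymm hBJv hle)
      exact hnadj A hA (hBeq ▸ (GP P).adj_symm ⟨⟨x, Finset.mem_inter.2 ⟨hx.1, hx.2⟩⟩, hAB, hBA⟩)
  have walkstep : ∀ (u v : C.verts), C.coe.Walk u v → u.1.1 ⊂ Jv.1 → v.1.1 ⊂ Jv.1 := by
    intro u v w
    induction w with
    | nil => exact id
    | @cons a b _ h p ih =>
      exact fun ha => ih (step a.1 b.1 a.2 b.2 (C.adj_sub h) ha)
  intro Jb hJb
  obtain ⟨w⟩ := hC ⟨Ja, hJa⟩ ⟨Jb, hJb⟩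
  exact walkstep _ _ w hsub
end
end

section
/- Suppose H_P has connected components D_1, D_2, …, D_ℓ. Let 1 ≤ r < s ≤ ℓ, and let J_a, J_b be connected order ideals of P. If χ_{J_a} is a subgraph of D_r while χ_{J_b} is a subgraph of D_s, then J_a and J_b are not adjacent in G_P. -/
attribute [local instance] Classical.propDecidable

noncomputable section

open Finset

variable {n : ℕ}

lemma mem_pIdeal {P : PartialOrder (Fin n)} {i k : Fin n} :
    k ∈ PIdeal P i ↔ P.le k i := by
  simp [PIdeal]

lemma pIdeal_subset_iff {P : PartialOrder (Fin n)} {i j : Fin n} :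
    PIdeal P i ⊆ PIdeal P j ↔ P.le i j := by
  constructor
  · intro h
    exact mem_pIdeal.mp (h (mem_pIdeal.mpr (P.le_refl i)))
  · intro h k hk
    exact mem_pIdeal.mpr (P.le_trans _ _ _ (mem_pIdeal.mp hk) h)

lemma pIdeal_connIdeal (P : PartialOrder (Fin n)) (i : Fin n) :
    IsConnIdeal P (PIdeal P i) := by
  constructor
  · intro a ha b hb
    exact mem_pIdeal.mpr (P.le_trans _ _ _ hb (mem_pIdeal.mp ha))
  · have hi : i ∈ (↑(PIdeal P i) : Set (Fin n)) := by
      simp [mem_pIdeal, P.le_refl]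
    rw [JConn]
    haveI : Nonempty (↑(PIdeal P i) : Set (Fin n)) := ⟨⟨i, hi⟩⟩
    refine SimpleGraph.Connected.mk ?_
    · intro u v
      have key : ∀ w : (↑(PIdeal P i) : Set (Fin n)),
          ((compGraph P).induce (↑(PIdeal P i) : Set (Fin n))).Reachable w ⟨i, hi⟩ := by
        intro w
        by_cases hw : w = ⟨i, hi⟩
        · rw [hw]
        · refine SimpleGraph.Adj.reachable ?_
          refine ⟨fun h => hw (Subtype.ext h), Or.inl ?_⟩
          exact mem_pIdeal.mp (Finset.mem_coe.mp w.2)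
      exact (key u).trans (key v).symm

lemma exists_gs_above (P : PartialOrder (Fin n)) (J : Finset (Fin n)) :
    ∀ x ∈ J, ∃ i ∈ gsJ P J, P.le x i := by
  have key : ∀ m : ℕ, ∀ x ∈ J, (J.filter (fun y => P.lt x y)).card ≤ m →
      ∃ i ∈ gsJ P J, P.le x i := by
    intro m
    induction m with
    | zero =>
      intro x hx hc
      refine ⟨x, ?_, P.le_refl x⟩
      rw [gsJ, Finset.mem_filter]
      refine ⟨hx, fun j hj hlt => ?_⟩
      have : j ∈ J.filter (fun y => P.lt x y) := Finset.mem_filter.mpr ⟨hj, hlt⟩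
      have hemp : J.filter (fun y => P.lt x y) = ∅ :=
        Finset.card_eq_zero.mp (Nat.le_zero.mp hc)
      rw [hemp] at this
      exact Finset.notMem_empty j this
    | succ m ih =>
      intro x hx hc
      by_cases h : ∀ j ∈ J, ¬ P.lt x j
      · exact ⟨x, Finset.mem_filter.mpr ⟨hx, h⟩, P.le_refl x⟩
      · push_neg at h
        obtain ⟨y, hy, hlt⟩ := h
        have hle : P.le x y := (P.lt_iff_le_not_ge x y).mp hlt |>.1
        have hsub : J.filter (fun z => P.lt y z) ⊂ J.filter (fun z => P.lt x z) := by
          refine ⟨fun z hz => ?_, fun hss => ?_⟩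
          · rw [Finset.mem_filter] at hz ⊢
            refine ⟨hz.1, ?_⟩
            have hyz := (P.lt_iff_le_not_ge y z).mp hz.2
            rw [P.lt_iff_le_not_ge]
            exact ⟨P.le_trans _ _ _ hle hyz.1, fun hzx => hyz.2 (P.le_trans _ _ _ hzx hle)⟩
          · have hymem : y ∈ J.filter (fun z => P.lt x z) := Finset.mem_filter.mpr ⟨hy, hlt⟩
            have := hss hymem
            rw [Finset.mem_filter] at this
            exact ((P.lt_iff_le_not_ge y y).mp this.2).2 (P.le_refl y)
        have hcard : (J.filter (fun z => P.lt y z)).card ≤ m := by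
          have := Finset.card_lt_card hsub
          omega
        obtain ⟨i, hi, hyi⟩ := ih y hy hcard
        exact ⟨i, hi, P.le_trans _ _ _ hle hyi⟩
  exact fun x hx => key _ x hx le_rfl

lemma walk_cross {V : Type*} {G : SimpleGraph V} (Pr : V → Prop) :
    ∀ {a b : V}, G.Walk a b → Pr a → ¬ Pr b →
      ∃ u v, G.Adj u v ∧ Pr u ∧ ¬ Pr v := by
  intro a b w
  induction w with
  | nil => intro h h'; exact absurd h h'
  | @cons a c b h w ih =>
    intro ha hb
    by_cases hc : Pr c
    · exact ih hc hb
    · exact ⟨a, c, h, ha, hc⟩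

lemma cross_edge (P : PartialOrder (Fin n)) {J : Finset (Fin n)} (hc : JConn P J)
    (T : Fin n → Prop) {x y : Fin n} (hxJ : x ∈ J) (hyJ : y ∈ J)
    (hxT : T x) (hyT : ¬ T y) :
    ∃ u v, u ∈ J ∧ v ∈ J ∧ T u ∧ ¬ T v ∧ u ≠ v ∧ (P.le u v ∨ P.le v u) := by
  have hx' : x ∈ (↑J : Set (Fin n)) := Finset.mem_coe.mpr hxJ
  have hy' : y ∈ (↑J : Set (Fin n)) := Finset.mem_coe.mpr hyJ
  obtain ⟨w⟩ := hc.preconnected ⟨x, hx'⟩ ⟨y, hy'⟩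
  obtain ⟨u, v, hadj, hu, hv⟩ :=
    walk_cross (fun z : (↑J : Set (Fin n)) => T z.1) w hxT hyT
  have hadj' : (compGraph P).Adj u.1 v.1 := hadj
  exact ⟨u.1, v.1, Finset.mem_coe.mp u.2, Finset.mem_coe.mp v.2, hu, hv, hadj'.1, hadj'.2⟩

/-- Lemma 3.3(1): if `J_a, J_b` are connected order ideals of
`P` such that `χ_{J_a}` is a subgraph of the connected component `D_a` of `H_P`
while `χ_{J_b}` is a subgraph of a different connected component `D_b`, then
`J_a` and `J_b` are not adjacent in `G_P`. -/
theorem statement_11 (n : ℕ) (P : PartialOrder (Fin n))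
    (Da Db : (HP P).ConnectedComponent) (hne : Da ≠ Db)
    (Ja Jb : ConnIdeal P)
    (hJa : ∀ v : ↥(PIdealSet P), (∃ i ∈ gsJ P Ja.1, v.1.1 = PIdeal P i) →
      (HP P).connectedComponentMk v = Da)
    (hJb : ∀ v : ↥(PIdealSet P), (∃ i ∈ gsJ P Jb.1, v.1.1 = PIdeal P i) →
      (HP P).connectedComponentMk v = Db) :
    ¬ (GP P).Adj Ja Jb := by
  intro hadj
  obtain ⟨hx, hab, hba⟩ := hadj
  obtain ⟨x, hxmem⟩ := hx
  rw [Finset.mem_inter] at hxmem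
  obtain ⟨hJaI, hJaC⟩ := Ja.2
  obtain ⟨hJbI, hJbC⟩ := Jb.2
  -- no "good pair" exists
  have good : ∀ i ∈ gsJ P Ja.1, ∀ j ∈ gsJ P Jb.1,
      PIdeal P i ≠ PIdeal P j ∧ ¬ Nontriv (PIdeal P i) (PIdeal P j) := by
    intro i hi j hj
    have hci : IsConnIdeal P (PIdeal P i) := pIdeal_connIdeal P i
    have hcj : IsConnIdeal P (PIdeal P j) := pIdeal_connIdeal P j
    set vi : ↥(PIdealSet P) := ⟨⟨PIdeal P i, hci⟩, ⟨i, rfl⟩⟩ with hvidef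
    set vj : ↥(PIdealSet P) := ⟨⟨PIdeal P j, hcj⟩, ⟨j, rfl⟩⟩ with hvjdef
    have hvi : (HP P).connectedComponentMk vi = Da := hJa vi ⟨i, hi, rfl⟩
    have hvj : (HP P).connectedComponentMk vj = Db := hJb vj ⟨j, hj, rfl⟩
    constructor
    · intro he
      apply hne
      rw [← hvi, ← hvj]
      have : vi = vj := Subtype.ext (Subtype.ext he)
      rw [this]
    · intro hnt
      apply hne
      rw [← hvi, ← hvj]
      have hadjHP : (HP P).Adj vi vj := hnt
      exact SimpleGraph.ConnectedComponent.sound hadjHP.reachable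
  -- comparability of generators with overlapping principal ideals
  have comp : ∀ i ∈ gsJ P Ja.1, ∀ j ∈ gsJ P Jb.1,
      ((PIdeal P i) ∩ (PIdeal P j)).Nonempty → P.lt i j ∨ P.lt j i := by
    intro i hi j hj hov
    obtain ⟨hne', hnt⟩ := good i hi j hj
    have hij : i ≠ j := fun h => hne' (by rw [h])
    rw [Nontriv] at hnt
    push_neg at hnt
    rcases (em (PIdeal P i ⊆ PIdeal P j)) with hsub | hsub
    · left
      have hle : P.le i j := pIdeal_subset_iff.mp hsub
      rw [P.lt_iff_le_not_ge]
      exact ⟨hle, fun hji => hij (P.le_antisymm _ _ hle hji)⟩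
    · right
      have hsub' := hnt hov hsub
      have hle : P.le j i := pIdeal_subset_iff.mp hsub'
      rw [P.lt_iff_le_not_ge]
      exact ⟨hle, fun hij' => hij (P.le_antisymm _ _ hij' hle)⟩
  -- members of gsJ
  have gs_mem : ∀ {J : Finset (Fin n)} {i : Fin n}, i ∈ gsJ P J →
      i ∈ J ∧ ∀ j ∈ J, ¬ P.lt i j := by
    intro J i hi
    exact Finset.mem_filter.mp hi
  -- step 1: a maximal element of Ja outside Jb
  have h1 : ∃ i ∈ gsJ P Ja.1, i ∉ Jb.1 := by
    by_contra h
    push_neg at h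
    apply hab
    intro y hy
    obtain ⟨i, hi, hyi⟩ := exists_gs_above P Ja.1 y hy
    exact hJbI i (h i hi) y hyi
  obtain ⟨i1, hi1gs, hi1nb⟩ := h1
  -- step 2: a maximal element of Ja inside Jb
  obtain ⟨z, hzmem⟩ := Finset.not_subset.mp hba
  obtain ⟨p, q, hpJb, hqJb, hpJa, hqJa, hpq, hcmp⟩ :=
    cross_edge P hJbC (fun w => w ∈ Ja.1) hxmem.2 hzmem.1 hxmem.1 hzmem.2
  have hpleq : P.le p q := by
    rcases hcmp with h | h
    · exact h
    · exact absurd (hJaI p hpJa q h) hqJa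
  obtain ⟨j', hj'gs, hqj'⟩ := exists_gs_above P Jb.1 q hqJb
  obtain ⟨i', hi'gs, hpi'⟩ := exists_gs_above P Ja.1 p hpJa
  have hj'na : j' ∉ Ja.1 := fun h => hqJa (hJaI j' h q hqj')
  have hi'b : i' ∈ Jb.1 := by
    have hov : ((PIdeal P i') ∩ (PIdeal P j')).Nonempty :=
      ⟨p, Finset.mem_inter.mpr ⟨mem_pIdeal.mpr hpi',
        mem_pIdeal.mpr (P.le_trans _ _ _ hpleq hqj')⟩⟩
    rcases comp i' hi'gs j' hj'gs hov with h | h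
    · exact hJbI j' (gs_mem hj'gs).1 i' ((P.lt_iff_le_not_ge _ _).mp h).1
    · exact absurd (hJaI i' (gs_mem hi'gs).1 j' ((P.lt_iff_le_not_ge _ _).mp h).1) hj'na
  -- step 3: crossing inside Ja between the part under gs∩Jb and the rest
  set W : Fin n → Prop := fun a => ∃ i ∈ gsJ P Ja.1, i ∈ Jb.1 ∧ P.le a i with hWdef
  have hi'W : W i' := ⟨i', hi'gs, hi'b, P.le_refl i'⟩
  have hi1W : ¬ W i1 := by
    rintro ⟨i2, hi2gs, hi2b, hle⟩
    have := (gs_mem hi1gs).2 i2 (gs_mem hi2gs).1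
    have heq : i1 = i2 := by
      by_contra hne'
      exact this ((P.lt_iff_le_not_ge _ _).mpr
        ⟨hle, fun h => hne' (P.le_antisymm _ _ hle h)⟩)
    exact hi1nb (heq ▸ hi2b)
  obtain ⟨u, v, huJa, hvJa, huW, hvW, huv, hcmp2⟩ :=
    cross_edge P hJaC W (gs_mem hi'gs).1 (gs_mem hi1gs).1 hi'W hi1W
  obtain ⟨i2, hi2gs, hi2b, hui2⟩ := huW
  have hulev : P.le u v := by
    rcases hcmp2 with h | h
    · exact h
    · exact absurd ⟨i2, hi2gs, hi2b, P.le_trans _ _ _ h hui2⟩ hvW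
  obtain ⟨it, hitgs, hvit⟩ := exists_gs_above P Ja.1 v hvJa
  have hitnb : it ∉ Jb.1 := fun h => hvW ⟨it, hitgs, h, hvit⟩
  -- step 4: get j above i2 in gs(Jb), derive the contradiction via pair (it, j)
  obtain ⟨j, hjgs, hi2j⟩ := exists_gs_above P Jb.1 i2 hi2b
  have hi2nej : i2 ≠ j := by
    intro h
    exact (good i2 hi2gs j hjgs).1 (by rw [h])
  have hlti2j : P.lt i2 j := (P.lt_iff_le_not_ge _ _).mpr
    ⟨hi2j, fun h => hi2nej (P.le_antisymm _ _ hi2j h)⟩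
  have hjna : j ∉ Ja.1 := fun h => (gs_mem hi2gs).2 j h hlti2j
  -- final pair (it, j)
  have huit : P.le u it := P.le_trans _ _ _ hulev hvit
  have huj : P.le u j := P.le_trans _ _ _ (P.le_trans _ _ _ hui2 hi2j) (P.le_refl j)
  have hov : ((PIdeal P it) ∩ (PIdeal P j)).Nonempty :=
    ⟨u, Finset.mem_inter.mpr ⟨mem_pIdeal.mpr huit, mem_pIdeal.mpr huj⟩⟩
  rcases comp it hitgs j hjgs hov with h | h
  · exact hitnb (hJbI j (gs_mem hjgs).1 it ((P.lt_iff_le_not_ge _ _).mp h).1)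
  · exact hjna (hJaI it (gs_mem hitgs).1 j ((P.lt_iff_le_not_ge _ _).mp h).1)
end
end

section
/- Let C_r be a connected component of G_P with vertex set V(C_r). Then J_r^max = ⋃_{J' ∈ V(C_r)} J' is a connected order ideal of P and is an isolated vertex of the graph G_P (i.e., it is adjacent to no vertex of G_P). -/
attribute [local instance] Classical.propDecidable

noncomputable section

open Finset

variable {n : ℕ}

/-- Lemma 3.4(1): for a connected component `C` of `G_P`, the
union `J^max = ⋃_{J' ∈ V(C)} J'` is a connected order ideal of `P` and is an
isolated vertex of `G_P`, i.e. it intersects no connected order ideal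
nontrivially. -/
theorem statement_13 (n : ℕ) (P : PartialOrder (Fin n))
    (c : (GP P).ConnectedComponent) :
    IsConnIdeal P (Finset.univ.filter
      (fun k : Fin n => ∃ A : ConnIdeal P,
        (GP P).connectedComponentMk A = c ∧ k ∈ A.1)) ∧
    ∀ B : ConnIdeal P,
      ¬ Nontriv (Finset.univ.filter
        (fun k : Fin n => ∃ A : ConnIdeal P,
          (GP P).connectedComponentMk A = c ∧ k ∈ A.1)) B.1 := by
  set S : Finset (Fin n) := Finset.univ.filter
      (fun k : Fin n => ∃ A : ConnIdeal P,
        (GP P).connectedComponentMk A = c ∧ k ∈ A.1) with hS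
  have hmemS : ∀ k : Fin n, k ∈ S ↔ ∃ A : ConnIdeal P,
      (GP P).connectedComponentMk A = c ∧ k ∈ A.1 := by
    intro k; simp [hS]
  have hsubS : ∀ A : ConnIdeal P, (GP P).connectedComponentMk A = c → A.1 ⊆ S := by
    intro A hA k hk; exact (hmemS k).2 ⟨A, hA, hk⟩
  -- reachability within a single connected ideal, transferred to `induce S`
  have key : ∀ A : ConnIdeal P, (GP P).connectedComponentMk A = c →
      ∀ u (hu : u ∈ A.1) v (hv : v ∈ A.1) (hu' : u ∈ (↑S : Set (Fin n)))
        (hv' : v ∈ (↑S : Set (Fin n))),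
      ((compGraph P).induce (↑S : Set (Fin n))).Reachable ⟨u, hu'⟩ ⟨v, hv'⟩ := by
    intro A hA u hu v hv hu' hv'
    have hsub : (↑A.1 : Set (Fin n)) ⊆ ↑S := by
      intro x hx; exact hsubS A hA hx
    have h1 : ((compGraph P).induce (↑A.1 : Set (Fin n))).Reachable ⟨u, hu⟩ ⟨v, hv⟩ :=
      A.2.2.preconnected _ _
    have h2 := h1.map ((compGraph P).induceHomOfLE hsub).toHom
    exact h2
  -- adjacency in GP preserves the component
  have step : ∀ X Y : ConnIdeal P, (GP P).Adj X Y →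
      (GP P).connectedComponentMk X = c → (GP P).connectedComponentMk Y = c := by
    intro X Y h hX
    rw [← hX]
    exact (SimpleGraph.ConnectedComponent.sound h.reachable.symm)
  -- main walk induction: reachability in `induce S` across a GP-walk
  have L : ∀ (A A' : ConnIdeal P) (p : (GP P).Walk A A'),
      (GP P).connectedComponentMk A = c →
      ∀ u (_ : u ∈ A.1) v (_ : v ∈ A'.1) (hu' : u ∈ (↑S : Set (Fin n)))
        (hv' : v ∈ (↑S : Set (Fin n))),
      ((compGraph P).induce (↑S : Set (Fin n))).Reachable ⟨u, hu'⟩ ⟨v, hv'⟩ := by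
    intro A A' p
    induction p with
    | nil => intro hA u hu v hv hu' hv'; exact key _ hA u hu v hv hu' hv'
    | @cons A X A' hadj q ih =>
      intro hA u hu v hv hu' hv'
      have hX : (GP P).connectedComponentMk X = c := step A X hadj hA
      obtain ⟨w, hw⟩ := hadj.1
      have hwA : w ∈ A.1 := (Finset.mem_inter.1 hw).1
      have hwX : w ∈ X.1 := (Finset.mem_inter.1 hw).2
      have hw' : w ∈ (↑S : Set (Fin n)) := hsubS A hA hwA
      have r1 := key A hA u hu w hwA hu' hw'
      have r2 := ih hX w hwX v hv hw' hv'
      exact r1.trans r2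
  refine ⟨⟨?_, ?_⟩, ?_⟩
  · -- IsIdeal
    intro i hi j hle
    obtain ⟨A, hA, hiA⟩ := (hmemS i).1 hi
    exact (hmemS j).2 ⟨A, hA, A.2.1 i hiA j hle⟩
  · -- JConn
    obtain ⟨A0, hA0⟩ := c.exists_rep
    obtain ⟨⟨u0, hu0⟩⟩ := A0.2.2.nonempty
    rw [JConn, SimpleGraph.connected_iff]
    constructor
    · rintro ⟨u, hu⟩ ⟨v, hv⟩
      obtain ⟨A, hA, huA⟩ := (hmemS u).1 hu
      obtain ⟨A', hA', hvA⟩ := (hmemS v).1 hv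
      have hr : (GP P).Reachable A A' :=
        SimpleGraph.ConnectedComponent.exact (hA.trans hA'.symm)
      obtain ⟨p⟩ := hr
      exact L A A' p hA u huA v hvA hu hv
    · exact ⟨⟨u0, hsubS A0 hA0 hu0⟩⟩
  · -- isolation
    rintro B ⟨hne, hnsub1, hnsub2⟩
    -- any component member intersecting B is contained in B
    have hBsub : ∀ X : ConnIdeal P, (GP P).connectedComponentMk X = c →
        (X.1 ∩ B.1).Nonempty → X.1 ⊆ B.1 := by
      intro X hX hXB
      by_contra hns
      by_cases hBX : B.1 ⊆ X.1
      · exact hnsub2 (hBX.trans (hsubS X hX))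
      · have hadj : (GP P).Adj X B := ⟨hXB, hns, hBX⟩
        have hBc : (GP P).connectedComponentMk B = c := step X B hadj hX
        exact hnsub2 (hsubS B hBc)
    obtain ⟨y, hy⟩ := hne
    have hyS : y ∈ S := (Finset.mem_inter.1 hy).1
    have hyB : y ∈ B.1 := (Finset.mem_inter.1 hy).2
    obtain ⟨A1, hA1, hyA1⟩ := (hmemS y).1 hyS
    have hA1B : A1.1 ⊆ B.1 := hBsub A1 hA1 ⟨y, Finset.mem_inter.2 ⟨hyA1, hyB⟩⟩
    -- propagate containment along walks
    have L2 : ∀ (X X' : ConnIdeal P) (p : (GP P).Walk X X'),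
        (GP P).connectedComponentMk X = c → X.1 ⊆ B.1 → X'.1 ⊆ B.1 := by
      intro X X' p
      induction p with
      | nil => intro _ h; exact h
      | @cons X Y X' hadj q ih =>
        intro hX hXB
        have hY : (GP P).connectedComponentMk Y = c := step X Y hadj hX
        obtain ⟨w, hw⟩ := hadj.1
        have hwX : w ∈ X.1 := (Finset.mem_inter.1 hw).1
        have hwY : w ∈ Y.1 := (Finset.mem_inter.1 hw).2
        have hYB : Y.1 ⊆ B.1 :=
          hBsub Y hY ⟨w, Finset.mem_inter.2 ⟨hwY, hXB hwX⟩⟩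
        exact ih hY hYB
    -- now every member of S is in B, contradicting hnsub1
    apply hnsub1
    intro z hz
    obtain ⟨A0, hA0, hzA0⟩ := (hmemS z).1 hz
    have hr : (GP P).Reachable A1 A0 :=
      SimpleGraph.ConnectedComponent.exact (hA1.trans hA0.symm)
    obtain ⟨p⟩ := hr
    exact L2 A1 A0 p hA1 hA1B hzA0
end
end

section
/- Let C_r be a connected component of G_P, let J_r^max = ⋃_{J' ∈ V(C_r)} J', and let J be a connected order ideal of P such that the induced subgraph χ_J is a subgraph of C_r. If J ≠ J_r^max, then J is a vertex of C_r. -/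
attribute [local instance] Classical.propDecidable

noncomputable section

open Finset

variable {n : ℕ}

lemma exists_maximal_above (P : PartialOrder (Fin n)) (s : Finset (Fin n)) (j : Fin n)
    (hj : j ∈ s) : ∃ m ∈ s, P.le j m ∧ ∀ x ∈ s, ¬ P.lt m x := by
  letI := P
  obtain ⟨m, hm, hmax⟩ := @Finset.exists_maximal (Fin n) P.toLE _ (s.filter (fun x => P.le j x))
    ⟨j, by simp [hj, P.le_refl]⟩
  simp only [Finset.mem_filter] at hm
  refine ⟨m, hm.1, hm.2, fun x hx hlt => ?_⟩
  exact hlt.not_ge (hmax (Finset.mem_filter.2 ⟨hx, P.le_trans _ _ _ hm.2 hlt.le⟩) hlt.le)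

lemma walk_step (P : PartialOrder (Fin n)) (J : ConnIdeal P) :
    ∀ {B B' : ConnIdeal P} (_ : (GP P).Walk B B'), ¬ B.1 ⊆ J.1 → B'.1 ⊆ J.1 →
      ∃ D : ConnIdeal P, (GP P).Reachable B D ∧ Nontriv D.1 J.1 := by
  intro B B' w
  induction w with
  | nil => exact fun h1 h2 => absurd h2 h1
  | @cons u v w' h p ih =>
    intro h1 h2
    by_cases hc : v.1 ⊆ J.1
    · refine ⟨u, SimpleGraph.Reachable.refl _, ?_, h1, ?_⟩
      · obtain ⟨x, hx⟩ := h.1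
        simp only [Finset.mem_inter] at hx
        exact ⟨x, Finset.mem_inter.2 ⟨hx.1, hc hx.2⟩⟩
      · intro hJB
        exact h.2.2 (hc.trans hJB)
    · obtain ⟨D, hD, hN⟩ := ih hc h2
      exact ⟨D, h.reachable.trans hD, hN⟩

/-- Lemma 3.4(2): let `C` be a connected component of `G_P`
and `J` a connected order ideal of `P` such that `χ_J` is a subgraph of `C`.
If `J ≠ J^max = ⋃_{J' ∈ V(C)} J'`, then `J` is a vertex of `C`. -/
theorem statement_14 (n : ℕ) (P : PartialOrder (Fin n))
    (c : (GP P).ConnectedComponent) (J : ConnIdeal P)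
    (hchi : ∀ A : ConnIdeal P, (∃ i ∈ gsJ P J.1, A.1 = PIdeal P i) →
      (GP P).connectedComponentMk A = c)
    (hne : J.1 ≠ Finset.univ.filter
      (fun k : Fin n => ∃ A : ConnIdeal P,
        (GP P).connectedComponentMk A = c ∧ k ∈ A.1)) :
    (GP P).connectedComponentMk J = c := by
  -- J is nonempty
  have hJne : J.1.Nonempty := by
    obtain ⟨⟨x, hx⟩⟩ := J.2.2.nonempty
    exact ⟨x, hx⟩
  -- every element of J is below a maximal element of J
  have hmax : ∀ j ∈ J.1, ∃ m ∈ gsJ P J.1, P.le j m := by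
    intro j hj
    obtain ⟨m, hm, hle, hmx⟩ := exists_maximal_above P J.1 j hj
    exact ⟨m, Finset.mem_filter.2 ⟨hm, hmx⟩, hle⟩
  -- the principal ideal of a maximal element, as a vertex in c
  have hgs : ∀ m ∈ gsJ P J.1, (GP P).connectedComponentMk ⟨PIdeal P m, pIdeal_connIdeal P m⟩ = c :=
    fun m hm => hchi _ ⟨m, hm, rfl⟩
  -- J is contained in the big union
  have hsub : J.1 ⊆ Finset.univ.filter
      (fun k : Fin n => ∃ A : ConnIdeal P,
        (GP P).connectedComponentMk A = c ∧ k ∈ A.1) := by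
    intro j hj
    obtain ⟨m, hm, hle⟩ := hmax j hj
    refine Finset.mem_filter.2 ⟨Finset.mem_univ _, ⟨PIdeal P m, pIdeal_connIdeal P m⟩,
      hgs m hm, ?_⟩
    simp [PIdeal, hle]
  -- there is a vertex A of c not contained in J
  obtain ⟨k, hk, hkJ⟩ := Finset.exists_of_ssubset (hsub.ssubset_of_ne hne)
  obtain ⟨A, hAc, hkA⟩ := (Finset.mem_filter.1 hk).2
  have hAnot : ¬ A.1 ⊆ J.1 := fun h => hkJ (h hkA)
  -- fix a maximal element of J and its principal ideal Λ ⊆ J, Λ ∈ c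
  obtain ⟨j₀, hj₀⟩ := hJne
  obtain ⟨m₀, hm₀, _⟩ := hmax j₀ hj₀
  set Lam : ConnIdeal P := ⟨PIdeal P m₀, pIdeal_connIdeal P m₀⟩ with hLam
  have hLamc : (GP P).connectedComponentMk Lam = c := hgs m₀ hm₀
  have hLamsub : Lam.1 ⊆ J.1 := by
    intro x hx
    have hx' : P.le x m₀ := by simpa [hLam, PIdeal] using hx
    exact J.2.1 m₀ (Finset.mem_filter.1 hm₀).1 x hx'
  -- A and Lam are in the same component, so reachable
  have hreach : (GP P).Reachable A Lam := by
    rw [← SimpleGraph.ConnectedComponent.eq]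
    exact hAc.trans hLamc.symm
  obtain ⟨w⟩ := hreach
  obtain ⟨D, hDreach, hNT⟩ := walk_step P J w hAnot hLamsub
  have hadj : (GP P).Adj D J := hNT
  have : (GP P).connectedComponentMk J = (GP P).connectedComponentMk D :=
    SimpleGraph.ConnectedComponent.eq.2 hadj.symm.reachable
  rw [this, ← hAc, SimpleGraph.ConnectedComponent.eq]
  exact hDreach.symm
end
end

section
/- Let P be a naturally labeled forest with duplications, i.e., a naturally labeled finite poset on {1,…,n} such that for any connected order ideal J_a of P there exists at most one other connected order ideal J_b intersecting J_a nontrivially. Then every connected component of G_P has at most two vertices, and if a connected component of G_P has exactly two vertices, then both of them are principal order ideals of P. -/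
attribute [local instance] Classical.propDecidable

noncomputable section

open Finset

variable {n : ℕ}

lemma cross_lemma {V : Type*} (G : SimpleGraph V) (S : Set V) :
    ∀ {u v : V}, G.Walk u v → u ∈ S → v ∉ S →
    ∃ a b, G.Adj a b ∧ a ∈ S ∧ b ∉ S := by
  intro u v w
  induction w with
  | nil => intro hu hv; exact absurd hu hv
  | @cons a b c h p ih =>
    intro hu hv
    by_cases hb : b ∈ S
    · exact ih hb hv
    · exact ⟨a, b, h, hu, hb⟩

lemma adj_of_walk (P : PartialOrder (Fin n))
    (hdup : ∀ Ja Jb Jc : ConnIdeal P,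
      Nontriv Ja.1 Jb.1 → Nontriv Ja.1 Jc.1 → Jb = Jc) :
    ∀ {A B : ConnIdeal P}, (GP P).Walk A B → A ≠ B → (GP P).Adj A B := by
  intro A B w
  induction w with
  | nil => intro h; exact absurd rfl h
  | @cons A X B h p ih =>
    intro hne
    by_cases hXB : X = B
    · subst hXB; exact h
    · exact absurd (hdup X A B h.symm (ih hXB)) hne

lemma nontriv_principal (P : PartialOrder (Fin n))
    (hdup : ∀ Ja Jb Jc : ConnIdeal P,
      Nontriv Ja.1 Jb.1 → Nontriv Ja.1 Jc.1 → Jb = Jc)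
    (A B : ConnIdeal P) (h : Nontriv A.1 B.1) :
    ∃ i : Fin n, A.1 = PIdeal P i := by
  obtain ⟨hint, hAB, hBA⟩ := h
  obtain ⟨x, hx⟩ := hint
  have hxA : x ∈ A.1 := (Finset.mem_inter.mp hx).1
  have hxB : x ∈ B.1 := (Finset.mem_inter.mp hx).2
  obtain ⟨a, haA, haB⟩ : ∃ a, a ∈ A.1 ∧ a ∉ B.1 := by
    by_contra hc
    push_neg at hc
    exact hAB hc
  have hconn := A.2.2
  obtain ⟨w⟩ := hconn.preconnected ⟨x, by exact hxA⟩ ⟨a, by exact haA⟩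
  obtain ⟨p, q, hadj, hpB, hqB⟩ :=
    cross_lemma _ {z : ↑(↑A.1 : Set (Fin n)) | (z : Fin n) ∈ B.1} w hxB haB
  have hadj' : (compGraph P).Adj (p : Fin n) (q : Fin n) := hadj
  obtain ⟨hne, hle⟩ := hadj'
  have hpB' : (p : Fin n) ∈ B.1 := hpB
  have hqB' : (q : Fin n) ∉ B.1 := hqB
  have hpq : P.le (p : Fin n) (q : Fin n) := by
    cases hle with
    | inl h => exact h
    | inr h => exact absurd (B.2.1 (p : Fin n) hpB' (q : Fin n) h) hqB'
  set v : Fin n := (q : Fin n) with hv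
  have hvA : v ∈ A.1 := q.2
  have hCI := pIdeal_connIdeal P v
  have hsubA : PIdeal P v ⊆ A.1 := by
    intro k hk
    simp only [PIdeal, Finset.mem_filter, Finset.mem_univ, true_and] at hk
    exact A.2.1 v hvA k hk
  have hvP : v ∈ PIdeal P v := by simp [PIdeal, P.le_refl]
  have hN1 : Nontriv B.1 A.1 := ⟨by rw [Finset.inter_comm]; exact ⟨x, hx⟩, hBA, hAB⟩
  have hN2 : Nontriv B.1 (PIdeal P v) := by
    refine ⟨⟨(p : Fin n), ?_⟩, ?_, ?_⟩
    · simp only [Finset.mem_inter]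
      exact ⟨hpB', by simp only [PIdeal, Finset.mem_filter, Finset.mem_univ, true_and]; exact hpq⟩
    · intro hc
      exact hBA (fun k hk => hsubA (hc hk))
    · intro hc
      exact hqB' (hc hvP)
  have := hdup B A ⟨PIdeal P v, hCI⟩ hN1 hN2
  exact ⟨v, congrArg Subtype.val this⟩

/-- from Section 3: if `P` is a naturally labeled forest with
duplications (every connected order ideal intersects at most one other
connected order ideal nontrivially), then every connected component of `G_P`
has at most two vertices, and when a component has two (distinct) vertices both
of them are principal order ideals of `P`. -/
theorem statement_16 (n : ℕ) (P : PartialOrder (Fin n)) (hnat : NatLabeled P)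
    (hdup : ∀ Ja Jb Jc : ConnIdeal P,
      Nontriv Ja.1 Jb.1 → Nontriv Ja.1 Jc.1 → Jb = Jc)
    (c : (GP P).ConnectedComponent) :
    Nat.card c.supp ≤ 2 ∧
    ∀ A ∈ c.supp, ∀ B ∈ c.supp, A ≠ B →
      (∃ i : Fin n, A.1 = PIdeal P i) ∧ ∃ i : Fin n, B.1 = PIdeal P i := by
  have adj : ∀ A ∈ c.supp, ∀ B ∈ c.supp, A ≠ B → (GP P).Adj A B := by
    intro A hA B hB hne
    have : (GP P).connectedComponentMk A = (GP P).connectedComponentMk B := by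
      rw [hA, hB]
    obtain ⟨w⟩ := SimpleGraph.ConnectedComponent.eq.mp this
    exact adj_of_walk P hdup w hne
  constructor
  · by_cases hex : ∃ A ∈ c.supp, ∃ B ∈ c.supp, A ≠ B
    · obtain ⟨A, hA, B, hB, hne⟩ := hex
      have hsub : c.supp ⊆ {A, B} := by
        intro C hC
        by_contra hC'
        simp only [Set.mem_insert_iff, Set.mem_singleton_iff, not_or] at hC'
        exact hne (hdup C A B (adj C hC A hA hC'.1) (adj C hC B hB hC'.2))
      calc Nat.card c.supp = c.supp.ncard := Nat.card_coe_set_eq _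
        _ ≤ ({A, B} : Set (ConnIdeal P)).ncard :=
            Set.ncard_le_ncard hsub ((Set.finite_singleton B).insert A)
        _ ≤ ({B} : Set (ConnIdeal P)).ncard + 1 := Set.ncard_insert_le _ _
        _ ≤ 2 := by rw [Set.ncard_singleton]
    · push_neg at hex
      obtain ⟨A0, hA0⟩ := c.exists_rep
      have hsub : c.supp ⊆ {A0} := by
        intro C hC
        exact hex C hC A0 hA0
      calc Nat.card c.supp = c.supp.ncard := Nat.card_coe_set_eq _
        _ ≤ ({A0} : Set (ConnIdeal P)).ncard :=
            Set.ncard_le_ncard hsub (Set.finite_singleton A0)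
        _ ≤ 2 := by rw [Set.ncard_singleton]; omega
  · intro A hA B hB hne
    have h1 := adj A hA B hB hne
    exact ⟨nontriv_principal P hdup A B h1, nontriv_principal P hdup B A h1.symm⟩
end
end
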